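/- Let V be a real inner product space and I, J, K orthogonal endomorphisms of V satisfying the quaternionic identities I² = J² = K² = -1 = IJK. Define the operator L on bilinear forms on V by L(Φ)(X,Y) = Φ(IX,IY) + Φ(JX,JY) + Φ(KX,KY). Then L² = 2L + 3·Id. -/

import Mathlib

/-- The operator `L` on bilinear forms: `(L Φ)(X,Y) = Φ(IX,IY) + Φ(JX,JY) + Φ(KX,KY)`. -/
def Lop {V : Type*} [AddCommGroup V] [Module ℝ V] (I J K : V →ₗ[ℝ] V)
    (Φ : V → V → ℝ) : V → V → ℝ :=
  fun X Y => Φ (I X) (I Y) + Φ (J X) (J Y) + Φ (K X) (K Y)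

/-- for orthogonal `I, J, K` satisfying the quaternionic identities
`I² = J² = K² = -1 = IJK`, the operator `L` on bilinear forms satisfies `L² = 2L + 3`. -/
theorem Lop_sq_eq_two_Lop_add_three {V : Type*} [NormedAddCommGroup V]
    [InnerProductSpace ℝ V] [FiniteDimensional ℝ V]
    (I J K : V →ₗ[ℝ] V)
    (hIorth : ∀ x y : V, (inner ℝ (I x) (I y) : ℝ) = inner ℝ x y)
    (hJorth : ∀ x y : V, (inner ℝ (J x) (J y) : ℝ) = inner ℝ x y)
    (hKorth : ∀ x y : V, (inner ℝ (K x) (K y) : ℝ) = inner ℝ x y)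
    (hI2 : ∀ x : V, I (I x) = -x)
    (hJ2 : ∀ x : V, J (J x) = -x)
    (hK2 : ∀ x : V, K (K x) = -x)
    (hIJK : ∀ x : V, I (J (K x)) = -x)
    (Φ : V →ₗ[ℝ] V →ₗ[ℝ] ℝ) :
    ∀ X Y : V,
      Lop I J K (Lop I J K (fun a b => Φ a b)) X Y
        = 2 * Lop I J K (fun a b => Φ a b) X Y + 3 * Φ X Y := by
  have hJK : ∀ x : V, J (K x) = I x := by
    intro x
    have h := congrArg I (hIJK x)
    rw [hI2, map_neg] at h
    exact neg_injective h
  have hIK : ∀ x : V, I (K x) = - J x := by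
    intro x
    have h := hJK (K x)
    rw [hK2, map_neg] at h
    exact h.symm ▸ rfl
  have hIJ : ∀ x : V, I (J x) = K x := by
    intro x
    have h := congrArg I (hIK x)
    rw [hI2, map_neg] at h
    exact (neg_injective h).symm
  have hKJ : ∀ x : V, K (J x) = - I x := by
    intro x
    have h := hIJ (J x)
    rw [hJ2, map_neg] at h
    exact h.symm
  have hKI : ∀ x : V, K (I x) = J x := by
    intro x
    have h := congrArg K (hKJ x)
    rw [hK2, map_neg] at h
    exact (neg_injective h).symm
  have hJI : ∀ x : V, J (I x) = - K x := by
    intro x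
    have h := congrArg J (hJK x)
    rw [hJ2] at h
    exact h.symm
  intro X Y
  simp only [Lop, hI2, hJ2, hK2, hIJ, hIK, hJI, hJK, hKI, hKJ, map_neg,
    LinearMap.neg_apply, neg_neg]
  ring
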